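/- Let G be a connected graph, k a positive integer, and suppose there exists a polynomial q of degree at most k with q(A(G)) = I + A(G^k), where A(G^k) is the adjacency matrix of the k-th power graph. If G is regular with largest eigenvalue λ₁ and remaining eigenvalues λ₂,...,λₙ, and q' = q - 1, then α_k(G) ≤ min{ |{i : q'(λᵢ) ≥ 0}| , |{i : q'(λᵢ) ≤ 0}| }. -/

import Mathlib

open Polynomial Finset

/-- The independence number of a simple graph: the maximum size of a set of
pairwise non-adjacent vertices. -/
noncomputable def SimpleGraph.finIndepNum {V : Type*} [Fintype V] (G : SimpleGraph V) : ℕ :=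
  sSup {m | ∃ s : Finset V, s.card = m ∧ ∀ u ∈ s, ∀ v ∈ s, ¬ G.Adj u v}

/-- The `k`-th power of a graph: distinct vertices are adjacent iff
their distance in `G` is (finite and) at most `k`. -/
def SimpleGraph.power {V : Type*} (G : SimpleGraph V) (k : ℕ) : SimpleGraph V where
  Adj u v := u ≠ v ∧ G.Reachable u v ∧ G.dist u v ≤ k
  symm := by
    constructor
    intro u v ⟨h1, h2, h3⟩
    exact ⟨h1.symm, h2.symm, by rwa [SimpleGraph.dist_comm]⟩
  loopless := by constructor; intro u ⟨h, _⟩; exact h rfl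

/-- The `k`-independence number: the maximum size of a set of vertices at
pairwise distance greater than `k`. -/
noncomputable def SimpleGraph.kIndepNum {V : Type*} [Fintype V] (G : SimpleGraph V) (k : ℕ) : ℕ :=
  (G.power k).finIndepNum
open Matrix


lemma myCharpolyConj {m : Type*} [Fintype m] [DecidableEq m]
    (U D V : Matrix m m ℝ) (hUV : U * V = 1) :
    (U * D * V).charpoly = D.charpoly := by
  have key : Matrix.charmatrix (U * D * V) =
      U.map (C : ℝ →+* ℝ[X]) * Matrix.charmatrix D * V.map (C : ℝ →+* ℝ[X]) := by
    rw [Matrix.charmatrix, Matrix.charmatrix, Matrix.mul_sub, Matrix.sub_mul]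
    congr 1
    · rw [mul_assoc, (Matrix.scalar_commute X (fun r' => Commute.all X r') (V.map C)).eq,
        ← mul_assoc, ← Matrix.map_mul, hUV]
      simp
    · simp [RingHom.mapMatrix_apply, Matrix.map_mul, mul_assoc]
  have hdet : (U.map (C : ℝ →+* ℝ[X])).det * (V.map (C : ℝ →+* ℝ[X])).det = 1 := by
    rw [← Matrix.det_mul, ← Matrix.map_mul, hUV]
    simp
  rw [Matrix.charpoly, key, Matrix.det_mul, Matrix.det_mul, Matrix.charpoly]
  ring_nf
  rw [mul_comm, ← mul_assoc, mul_comm ((V.map _).det), hdet, one_mul]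

lemma myCharpolyDiagonal {m : Type*} [Fintype m] [DecidableEq m] [LinearOrder m]
    (f : m → ℝ) : (Matrix.diagonal f).charpoly = ∏ i, (X - C (f i)) := by
  rw [Matrix.charpoly_of_upperTriangular _ (Matrix.blockTriangular_diagonal f)]
  simp

lemma myAevalMulVec {m : Type*} [Fintype m] [DecidableEq m] (A : Matrix m m ℝ)
    (v : m → ℝ) (μ : ℝ) (hv : A *ᵥ v = μ • v) (p : ℝ[X]) :
    (aeval A p) *ᵥ v = p.eval μ • v := by
  induction p using Polynomial.induction_on with
  | C a =>
      simp [aeval_C, Algebra.algebraMap_eq_smul_one, Matrix.smul_mulVec,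
        Matrix.one_mulVec]
  | add p q hp hq =>
      simp [map_add, Matrix.add_mulVec, hp, hq, add_smul]
  | monomial k a ih =>
      have h1 : (C a * X ^ (k + 1) : ℝ[X]) = C a * X ^ k * X := by ring
      rw [h1, _root_.map_mul, aeval_X, ← Matrix.mulVec_mulVec, hv, Matrix.mulVec_smul, ih]
      simp [smul_smul]
      ring_nf

lemma myInertia {n : ℕ} (B : Matrix (Fin n) (Fin n) ℝ)
    (b : OrthonormalBasis (Fin n) ℝ (EuclideanSpace ℝ (Fin n)))
    (μ : Fin n → ℝ) (hBb : ∀ i, B *ᵥ ⇑(b i) = μ i • ⇑(b i))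
    (s : Finset (Fin n)) (hs : ∀ u ∈ s, ∀ v ∈ s, B u v = 0) :
    s.card ≤ (univ.filter fun i => μ i ≤ 0).card := by
  by_contra hlt
  push_neg at hlt
  classical
  set T : Finset (Fin n) := univ.filter (fun i => ¬ (μ i ≤ 0)) with hT
  have hcardT : (univ.filter fun i => μ i ≤ 0).card + T.card = n := by
    rw [hT, Finset.card_filter_add_card_filter_not]
    simp
  -- the two subspaces
  let W₁ : Submodule ℝ (EuclideanSpace ℝ (Fin n)) :=
    Submodule.span ℝ (Set.range fun u : {u // u ∈ s} => EuclideanSpace.single (u : Fin n) (1 : ℝ))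
  let W₂ : Submodule ℝ (EuclideanSpace ℝ (Fin n)) :=
    Submodule.span ℝ (Set.range fun i : {i // i ∈ T} => b (i : Fin n))
  have hli1 : LinearIndependent ℝ
      (fun u : {u // u ∈ s} => EuclideanSpace.single (u : Fin n) (1 : ℝ)) := by
    have h := (EuclideanSpace.basisFun (Fin n) ℝ).toBasis.linearIndependent
    have h2 := h.comp (fun u : {u // u ∈ s} => (u : Fin n)) Subtype.val_injective
    simpa [Function.comp_def, EuclideanSpace.basisFun_apply] using h2
  have hli2 : LinearIndependent ℝ (fun i : {i // i ∈ T} => b (i : Fin n)) := by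
    have h := b.toBasis.linearIndependent
    have h2 := h.comp (fun i : {i // i ∈ T} => (i : Fin n)) Subtype.val_injective
    simpa [Function.comp_def] using h2
  have hW1 : Module.finrank ℝ W₁ = s.card := by
    rw [finrank_span_eq_card hli1, Fintype.card_coe]
  have hW2 : Module.finrank ℝ W₂ = T.card := by
    rw [finrank_span_eq_card hli2, Fintype.card_coe]
  have hsum := Submodule.finrank_sup_add_finrank_inf_eq W₁ W₂
  have hle : Module.finrank ℝ ↥(W₁ ⊔ W₂) ≤ n := by
    have := Submodule.finrank_le (W₁ ⊔ W₂)
    simpa using this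
  have hpos : 0 < Module.finrank ℝ ↥(W₁ ⊓ W₂) := by omega
  have : Nontrivial ↥(W₁ ⊓ W₂) := Module.finrank_pos_iff.mp hpos
  obtain ⟨x, hx0⟩ := exists_ne (0 : ↥(W₁ ⊓ W₂))
  set y : EuclideanSpace ℝ (Fin n) := (x : EuclideanSpace ℝ (Fin n)) with hy
  have hy0 : y ≠ 0 := fun h => hx0 (Subtype.ext h)
  have hyW1 : y ∈ W₁ := x.2.1
  have hyW2 : y ∈ W₂ := x.2.2
  -- expansion in the eigenbasis
  obtain ⟨c, hc⟩ := (Submodule.mem_span_range_iff_exists_fun ℝ).mp hyW2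
  let c' : Fin n → ℝ := fun i => if h : i ∈ T then c ⟨i, h⟩ else 0
  have hy2 : ∑ i : Fin n, c' i • b i = y := by
    rw [← hc]
    rw [show (∑ i : {i // i ∈ T}, c i • b (i : Fin n))
        = ∑ i : {i // i ∈ T}, c' (i : Fin n) • b (i : Fin n) from
      Finset.sum_congr rfl (fun i _ => by simp [c', dif_pos i.2])]
    rw [Finset.sum_coe_sort T (fun i => c' i • b i)]
    exact (Finset.sum_subset (Finset.subset_univ T)
      (fun i _ hi => by simp [c', dif_neg hi])).symm
  -- y vanishes outside s
  have hys : ∀ j, j ∉ s → y j = 0 := by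
    obtain ⟨d, hd⟩ := (Submodule.mem_span_range_iff_exists_fun ℝ).mp hyW1
    intro j hj
    rw [← hd, WithLp.ofLp_sum, Finset.sum_apply]
    refine Finset.sum_eq_zero fun u _ => ?_
    have : EuclideanSpace.single (u : Fin n) (1 : ℝ) j = 0 := by
      rw [EuclideanSpace.single_apply]
      simp only [ite_eq_right_iff]
      intro h; exact absurd (h ▸ u.2) hj
    show d u • EuclideanSpace.single (u : Fin n) (1 : ℝ) j = 0
    rw [this]; simp
  -- the quadratic form value, computed two ways
  have hmul : B *ᵥ ⇑y = ∑ i : Fin n, (c' i * μ i) • ⇑(b i) := by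
    have h1 : (⇑y : Fin n → ℝ) = ∑ i : Fin n, c' i • ⇑(b i) := by
      rw [← hy2]
      simp [WithLp.ofLp_sum]
    rw [h1]
    rw [show B *ᵥ (∑ i : Fin n, c' i • ⇑(b i)) = ∑ i : Fin n, c' i • (B *ᵥ ⇑(b i)) from by
      rw [← Matrix.mulVecLin_apply, map_sum]
      exact Finset.sum_congr rfl fun i _ => by rw [_root_.map_smul, Matrix.mulVecLin_apply]]
    refine Finset.sum_congr rfl fun i _ => ?_
    rw [hBb i, smul_smul]
  have hQ0 : dotProduct (⇑y) (B *ᵥ ⇑y) = 0 := by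
    have hBy : ∀ j ∈ s, (B *ᵥ ⇑y) j = 0 := by
      intro j hj
      show dotProduct (fun v => B j v) ⇑y = 0
      unfold dotProduct
      refine Finset.sum_eq_zero fun v _ => ?_
      show B j v * y v = 0
      by_cases hv : v ∈ s
      · rw [hs j hj v hv, zero_mul]
      · rw [hys v hv, mul_zero]
    unfold dotProduct
    refine Finset.sum_eq_zero fun j _ => ?_
    show y j * (B *ᵥ ⇑y) j = 0
    by_cases hj : j ∈ s
    · rw [hBy j hj, mul_zero]
    · rw [hys j hj, zero_mul]
  have horth : ∀ i j : Fin n, dotProduct (⇑(b i)) (⇑(b j))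
      = if i = j then (1 : ℝ) else 0 := by
    intro i j
    have h2 : (inner ℝ (b i) (b j) : ℝ) = dotProduct (⇑(b i)) (⇑(b j)) := by
      simp [PiLp.inner_apply, dotProduct, mul_comm]
    rw [← h2, orthonormal_iff_ite.mp b.orthonormal i j]
  have hQpos : 0 < dotProduct (⇑y) (B *ᵥ ⇑y) := by
    have h1 : (⇑y : Fin n → ℝ) = ∑ i : Fin n, c' i • ⇑(b i) := by
      rw [← hy2]
      simp [WithLp.ofLp_sum]
    have hQ : dotProduct (⇑y) (B *ᵥ ⇑y) = ∑ i : Fin n, c' i * (c' i * μ i) := by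
      have hw : (B *ᵥ ⇑y) = ⇑(∑ i : Fin n, (c' i * μ i) • b i) := by
        rw [hmul]; simp [WithLp.ofLp_sum]
      have hdp : dotProduct (⇑y) (⇑(∑ i : Fin n, (c' i * μ i) • b i))
          = (inner ℝ y (∑ i : Fin n, (c' i * μ i) • b i) : ℝ) := by
        simp [PiLp.inner_apply, dotProduct, mul_comm]
      rw [hw, hdp, ← hy2]
      have h3 := b.orthonormal.inner_sum c' (fun i => c' i * μ i) univ
      simpa using h3
    rw [hQ]
    have hex : ∃ i, c' i ≠ 0 := by
      by_contra hall
      push_neg at hall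
      apply hy0
      have : (⇑y : Fin n → ℝ) = 0 := by
        rw [h1]; refine Finset.sum_eq_zero fun i _ => by rw [hall i, zero_smul]
      ext j
      exact congrFun this j
    obtain ⟨i0, hi0⟩ := hex
    have hi0T : i0 ∈ T := by
      by_contra hmem
      exact hi0 (dif_neg hmem)
    refine Finset.sum_pos' (fun i _ => ?_) ⟨i0, Finset.mem_univ i0, ?_⟩
    · by_cases hi : i ∈ T
      · have hμ : 0 < μ i := by
          have := (Finset.mem_filter.mp (hT ▸ hi)).2
          linarith [lt_of_not_ge this]
        have : c' i * (c' i * μ i) = μ i * (c' i)^2 := by ring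
        rw [this]
        positivity
      · simp [c', dif_neg hi]
    · have hμ : 0 < μ i0 := by
        have := (Finset.mem_filter.mp (hT ▸ hi0T)).2
        linarith [lt_of_not_ge this]
      have : c' i0 * (c' i0 * μ i0) = μ i0 * (c' i0)^2 := by ring
      rw [this]
      positivity
  rw [hQ0] at hQpos
  exact lt_irrefl 0 hQpos

lemma myRoots {n : ℕ} (f : Fin n → ℝ) :
    (∏ i, (X - C (f i))).roots = Finset.univ.val.map f := by
  rw [Finset.prod_eq_multiset_prod]
  rw [show (Multiset.map (fun i => X - C (f i)) Finset.univ.val)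
      = Multiset.map ((fun a => X - C a) ∘ f) Finset.univ.val from rfl]
  rw [← Multiset.map_map, Polynomial.roots_multiset_prod_X_sub_C]

lemma myCount {n : ℕ} (f g : Fin n → ℝ)
    (h : Finset.univ.val.map f = Finset.univ.val.map g)
    (P : ℝ → Prop) [DecidablePred P] :
    (univ.filter fun i => P (f i)).card = (univ.filter fun i => P (g i)).card := by
  have h1 : ∀ f : Fin n → ℝ,
      (univ.filter fun i => P (f i)).card = (Finset.univ.val.map f).countP P := by
    intro f
    rw [Multiset.countP_map]
    rfl
  rw [h1, h1, h]

lemma myHermitian {n : ℕ} (G : SimpleGraph (Fin n)) [DecidableRel G.Adj] :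
    (G.adjMatrix ℝ).IsHermitian := by
  rw [Matrix.IsHermitian]
  ext i j
  simp [Matrix.conjTranspose_apply, SimpleGraph.adjMatrix_apply, G.adj_comm]

lemma myCharpolyHerm {n : ℕ} (A : Matrix (Fin n) (Fin n) ℝ) (hA : A.IsHermitian) :
    A.charpoly = ∏ i, (X - C (hA.eigenvalues i)) := by
  have hofreal : (RCLike.ofReal ∘ hA.eigenvalues : Fin n → ℝ) = hA.eigenvalues := by
    funext i
    simp [RCLike.ofReal]
  calc A.charpoly
      = ((hA.eigenvectorUnitary : Matrix (Fin n) (Fin n) ℝ)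
          * Matrix.diagonal (RCLike.ofReal ∘ hA.eigenvalues)
          * (star (hA.eigenvectorUnitary : Matrix (Fin n) (Fin n) ℝ))).charpoly := by
        exact congrArg Matrix.charpoly hA.spectral_theorem
    _ = (Matrix.diagonal (RCLike.ofReal ∘ hA.eigenvalues)).charpoly :=
        myCharpolyConj _ _ _ (Matrix.mem_unitaryGroup_iff.mp hA.eigenvectorUnitary.2)
    _ = ∏ i, (X - C (hA.eigenvalues i)) := by
        rw [hofreal]
        exact myCharpolyDiagonal _

/-- If `G` is a connected regular graph and `q` is a polynomial of degree at most `k`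
with `q(A(G)) = I + A(G^k)`, then with `q' = q - 1`,
`α_k(G) ≤ min{ #{i : q'(λᵢ) ≥ 0}, #{i : q'(λᵢ) ≤ 0} }`. -/
theorem inertia_bound_power {n d k : ℕ} (hk : 1 ≤ k) (G : SimpleGraph (Fin n))
    [DecidableRel G.Adj] [DecidableRel (G.power k).Adj]
    (hconn : G.Connected) (hreg : G.IsRegularOfDegree d)
    (lam : Fin n → ℝ) (hlam : Antitone lam)
    (hchar : (G.adjMatrix ℝ).charpoly = ∏ i, (X - C (lam i)))
    (q : Polynomial ℝ) (hq : q.natDegree ≤ k)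
    (hqA : aeval (G.adjMatrix ℝ) q = 1 + (G.power k).adjMatrix ℝ) :
    G.kIndepNum k ≤ min ((univ.filter fun i => 0 ≤ (q - 1).eval (lam i)).card)
      ((univ.filter fun i => (q - 1).eval (lam i) ≤ 0).card) := by
  classical
  set A := G.adjMatrix ℝ with hAdef
  set B := (G.power k).adjMatrix ℝ with hBdef
  have hA : A.IsHermitian := myHermitian G
  -- multiset of eigenvalues agrees with lam
  have hml : Finset.univ.val.map hA.eigenvalues = Finset.univ.val.map lam := by
    have h1 : (∏ i, (X - C (hA.eigenvalues i))) = ∏ i, (X - C (lam i)) := by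
      rw [← myCharpolyHerm A hA, hchar]
    have h2 := congrArg Polynomial.roots h1
    rwa [myRoots, myRoots] at h2
  -- eigenvectors of B
  set b := hA.eigenvectorBasis with hbdef
  have hEig : ∀ i, B *ᵥ ⇑(b i) = ((q - 1).eval (hA.eigenvalues i)) • ⇑(b i) := by
    intro i
    have h1 := hA.mulVec_eigenvectorBasis i
    have h2 := myAevalMulVec A ⇑(b i) (hA.eigenvalues i) h1 (q - 1)
    rw [_root_.map_sub, _root_.map_one, hqA] at h2
    have h3 : (1 : Matrix (Fin n) (Fin n) ℝ) + B - 1 = B := by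
      rw [add_sub_cancel_left]
    rwa [h3] at h2
  -- bound for an arbitrary independent set in the power graph
  have key : ∀ s : Finset (Fin n), (∀ u ∈ s, ∀ v ∈ s, ¬ (G.power k).Adj u v) →
      s.card ≤ min ((univ.filter fun i => 0 ≤ (q - 1).eval (lam i)).card)
        ((univ.filter fun i => (q - 1).eval (lam i) ≤ 0).card) := by
    intro s hind
    have hBs : ∀ u ∈ s, ∀ v ∈ s, B u v = 0 := by
      intro u hu v hv
      simp [hBdef, SimpleGraph.adjMatrix_apply, hind u hu v hv]
    refine le_min ?_ ?_
    · -- use -B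
      have hEig' : ∀ i, (-B) *ᵥ ⇑(b i) = (-((q - 1).eval (hA.eigenvalues i))) • ⇑(b i) := by
        intro i
        rw [Matrix.neg_mulVec, hEig i, neg_smul]
      have h := myInertia (-B) b (fun i => -((q - 1).eval (hA.eigenvalues i))) hEig' s
        (fun u hu v hv => by rw [Matrix.neg_apply, hBs u hu v hv, neg_zero])
      have hcnt : (univ.filter fun i => -((q - 1).eval (hA.eigenvalues i)) ≤ 0).card
          = (univ.filter fun i => 0 ≤ (q - 1).eval (lam i)).card := by
        rw [myCount hA.eigenvalues lam hml (fun x => -((q - 1).eval x) ≤ 0)]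
        congr 1
        apply Finset.filter_congr
        intro i _
        simp [neg_nonpos]
      rw [hcnt] at h
      exact h
    · have h := myInertia B b (fun i => (q - 1).eval (hA.eigenvalues i)) hEig s hBs
      have hcnt : (univ.filter fun i => (q - 1).eval (hA.eigenvalues i) ≤ 0).card
          = (univ.filter fun i => (q - 1).eval (lam i) ≤ 0).card := by
        exact myCount _ _ hml (fun x => (q-1).eval x ≤ 0)
      rw [hcnt] at h
      exact h
  -- conclude for the supremum
  refine csSup_le ⟨0, ∅, by simp⟩ ?_
  rintro m ⟨s, hcard, hind⟩
  exact hcard ▸ key s hind
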